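/- For every integer k ≥ 1, the series Σ_{j≥0} (2j+k-1)!/(j!(j+k)!) · 4^{-j} converges and equals 2^k/k. -/

import Mathlib

open Finset Filter

private lemma shift_sum (g : ℕ → ℕ) (K : ℕ) :
    (∑ i ∈ Finset.range (K+1), g (i+1)) + g 0
      = (∑ i ∈ Finset.range (K+1), g i) + g (K+1) := by
  have h1 := Finset.sum_range_succ g (K+1)
  have h2 := Finset.sum_range_succ' g (K+1)
  omega

private lemma key_nat (K n : ℕ) :
    (∑ i ∈ Finset.range (K+1), (2*n+K+2).choose (n+(i+1))) + 4 * (2*n+K).choose n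
      = 4 * (∑ i ∈ Finset.range (K+1), (2*n+K).choose (n+i)) + 2 * (2*n+K+1).choose n := by
  set M := 2*n+K with hM
  have h1 : (∑ i ∈ Finset.range (K+1), (M+2).choose (n+(i+1)))
      = (∑ i ∈ Finset.range (K+1), (M+1).choose (n+i))
        + (∑ i ∈ Finset.range (K+1), (M+1).choose (n+(i+1))) := by
    rw [← Finset.sum_add_distrib]
    refine Finset.sum_congr rfl fun i _ => ?_
    rw [show n+(i+1) = (n+i)+1 by omega, show M+2 = (M+1)+1 by rfl, Nat.choose_succ_succ,
      Nat.succ_eq_add_one, Nat.add_assoc]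
  have h2 : (∑ i ∈ Finset.range (K+1), (M+1).choose (n+(i+1)))
      = (∑ i ∈ Finset.range (K+1), M.choose (n+i))
        + (∑ i ∈ Finset.range (K+1), M.choose (n+(i+1))) := by
    rw [← Finset.sum_add_distrib]
    refine Finset.sum_congr rfl fun i _ => ?_
    rw [show n+(i+1) = (n+i)+1 by omega, Nat.choose_succ_succ,
      Nat.succ_eq_add_one, Nat.add_assoc]
  have hsh1 : (∑ i ∈ Finset.range (K+1), M.choose (n+(i+1))) + M.choose n
      = (∑ i ∈ Finset.range (K+1), M.choose (n+i)) + M.choose (n+(K+1)) := by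
    simpa using shift_sum (fun i => M.choose (n+i)) K
  have hsh2 : (∑ i ∈ Finset.range (K+1), (M+1).choose (n+(i+1))) + (M+1).choose n
      = (∑ i ∈ Finset.range (K+1), (M+1).choose (n+i)) + (M+1).choose (n+(K+1)) := by
    simpa using shift_sum (fun i => (M+1).choose (n+i)) K
  have hsym1 : (M+1).choose (n+(K+1)) = (M+1).choose n := by
    have h := Nat.choose_symm (n := M+1) (k := n+(K+1)) (by omega)
    rw [show M+1-(n+(K+1)) = n by omega] at h
    omega
  have hsym2 : M.choose (n+K) = M.choose n := by
    have h := Nat.choose_symm (n := M) (k := n+K) (by omega)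
    rw [show M-(n+K) = n by omega] at h
    omega
  have hp : (M+1).choose (n+(K+1)) = M.choose (n+K) + M.choose (n+(K+1)) := by
    rw [show n+(K+1) = (n+K)+1 by omega, Nat.choose_succ_succ]
  omega

/-- `C(2n+K, m) ≤ 2^K · C(2n, n)` -/
private lemma choose_row_bound (n : ℕ) : ∀ K m : ℕ, (2*n+K).choose m ≤ 2^K * (2*n).choose n := by
  intro K
  induction K with
  | zero =>
    intro m
    simpa [show (2*n)/2 = n by omega] using Nat.choose_le_middle m (2*n)
  | succ K ih =>
    intro m
    match m with
    | 0 =>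
      have h1 : 0 < (2*n).choose n := Nat.choose_pos (by omega)
      have h2 : 1 ≤ 2^(K+1) * (2*n).choose n := Nat.one_le_iff_ne_zero.2 (by positivity)
      simpa using h2
    | m+1 =>
      rw [show 2*n+(K+1) = (2*n+K)+1 by omega, Nat.choose_succ_succ]
      calc (2*n+K).choose m + (2*n+K).choose (m+1)
          ≤ 2^K * (2*n).choose n + 2^K * (2*n).choose n := Nat.add_le_add (ih m) (ih (m+1))
        _ = 2^(K+1) * (2*n).choose n := by ring

private lemma cb_sq_le (n : ℕ) :
    (((2*n).choose n : ℝ)/4^n)^2 * (2*n+1) ≤ 1 := by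
  induction n with
  | zero => norm_num
  | succ n ih =>
    have hrec : ((n:ℝ)+1) * ((2*(n+1)).choose (n+1) : ℝ)
        = 2*(2*(n:ℝ)+1) * ((2*n).choose n : ℝ) := by
      have h2 : (n+1) * (2*(n+1)).choose (n+1) = 2 * (2*n+1) * (2*n).choose n :=
        Nat.succ_mul_centralBinom_succ n
      exact_mod_cast congrArg (Nat.cast : ℕ → ℝ) h2
    set a : ℝ := ((2*n).choose n : ℝ) with ha
    set b : ℝ := ((2*(n+1)).choose (n+1) : ℝ) with hb
    have ha0 : 0 ≤ a := Nat.cast_nonneg _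
    have h4 : (0:ℝ) < 4^n := by positivity
    have hb_eq : b = (2*(2*(n:ℝ)+1) * a)/((n:ℝ)+1) := by
      rw [eq_div_iff (by positivity)]
      linarith [hrec]
    have key : (b/4^(n+1))^2 * (2*((n:ℝ)+1)+1)
        = ((a/4^n)^2 * (2*n+1)) * ((2*(n:ℝ)+1)*(2*(n:ℝ)+3)/(4*((n:ℝ)+1)^2)) := by
      rw [hb_eq]
      field_simp
      ring
    have hfrac : (2*(n:ℝ)+1)*(2*(n:ℝ)+3)/(4*((n:ℝ)+1)^2) ≤ 1 := by
      rw [div_le_one (by positivity)]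
      nlinarith [sq_nonneg ((n:ℝ)+1)]
    have hnn2 : (0:ℝ) ≤ (2*(n:ℝ)+1)*(2*(n:ℝ)+3)/(4*((n:ℝ)+1)^2) := by positivity
    have final : (b/4^(n+1))^2 * (2*((n:ℝ)+1)+1) ≤ 1 := by
      rw [key]
      exact mul_le_one₀ ih hnn2 hfrac
    push_cast
    linarith [final]

private lemma cb_tendsto_zero :
    Tendsto (fun n : ℕ => ((2*n).choose n : ℝ)/4^n) atTop (nhds 0) := by
  have hb : ∀ n : ℕ, ((2*n).choose n : ℝ)/4^n ≤ Real.sqrt (1/(2*n+1)) := by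
    intro n
    apply Real.le_sqrt_of_sq_le
    rw [le_div_iff₀ (by positivity)]
    simpa [one_mul] using cb_sq_le n
  have h0 : ∀ n : ℕ, (0:ℝ) ≤ ((2*n).choose n : ℝ)/4^n := fun n => by positivity
  have hlim : Tendsto (fun n : ℕ => Real.sqrt (1/(2*n+1))) atTop (nhds 0) := by
    have h1 : Tendsto (fun n : ℕ => (2*(n:ℝ)+1)) atTop atTop := by
      apply Filter.tendsto_atTop_add_const_right
      exact (tendsto_natCast_atTop_atTop).const_mul_atTop (by norm_num)
    have h2 : Tendsto (fun n : ℕ => 1/(2*(n:ℝ)+1)) atTop (nhds 0) := by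
      simp only [one_div]
      exact h1.inv_tendsto_atTop
    have h3 := h2.sqrt
    simpa using h3
  exact squeeze_zero h0 hb hlim

theorem stmt_5 (k : ℕ) (hk : 1 ≤ k) :
    HasSum
      (fun j : ℕ =>
        (Nat.factorial (2 * j + k - 1) : ℝ) /
          (Nat.factorial j * Nat.factorial (j + k)) * (1 / 4) ^ j)
      (2 ^ k / k) := by
  obtain ⟨K, rfl⟩ : ∃ K, k = K + 1 := ⟨k - 1, by omega⟩
  set f : ℕ → ℝ := fun j =>
    (Nat.factorial (2 * j + (K+1) - 1) : ℝ) /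
      (Nat.factorial j * Nat.factorial (j + (K+1))) * (1 / 4) ^ j with hf
  have hf_eq : ∀ j, f j = ((2*j+K).factorial : ℝ) /
      (j.factorial * (j+K+1).factorial) * (1/4)^j := by
    intro j
    simp only [hf, show 2*j+(K+1)-1 = 2*j+K by omega, show j+(K+1) = j+K+1 by omega]
  set T : ℕ → ℝ := fun n =>
    2 / ((K+1) * 4^n) * ∑ i ∈ Finset.range (K+1), ((2*n+K).choose (n+i) : ℝ) with hT
  have hK1 : (0:ℝ) < (K:ℝ) + 1 := by positivity
  -- step identity
  have hstep : ∀ n, T n - T (n+1) = f n := by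
    intro n
    have h4n : (0:ℝ) < 4^n := by positivity
    have hp0 : (0:ℝ) < (n.factorial : ℝ) := by exact_mod_cast n.factorial_pos
    have hq0 : (0:ℝ) < ((n+K).factorial : ℝ) := by exact_mod_cast (n+K).factorial_pos
    have hnk1 : (0:ℝ) < (n:ℝ)+(K:ℝ)+1 := by positivity
    have hkeyR : (∑ i ∈ Finset.range (K+1), ((2*(n+1)+K).choose ((n+1)+i) : ℝ))
        = 4 * (∑ i ∈ Finset.range (K+1), ((2*n+K).choose (n+i) : ℝ))
          + 2 * ((2*n+K+1).choose n : ℝ) - 4 * ((2*n+K).choose n : ℝ) := by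
      have hc : (∑ i ∈ Finset.range (K+1), ((2*n+K+2).choose (n+(i+1)) : ℝ))
          + 4 * ((2*n+K).choose n : ℝ)
          = 4 * (∑ i ∈ Finset.range (K+1), ((2*n+K).choose (n+i) : ℝ))
            + 2 * ((2*n+K+1).choose n : ℝ) := by
        exact_mod_cast congrArg (Nat.cast : ℕ → ℝ) (key_nat K n)
      have hconv : (∑ i ∈ Finset.range (K+1), ((2*(n+1)+K).choose ((n+1)+i) : ℝ))
          = (∑ i ∈ Finset.range (K+1), ((2*n+K+2).choose (n+(i+1)) : ℝ)) := by
        refine Finset.sum_congr rfl fun i _ => ?_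
        rw [show 2*(n+1)+K = 2*n+K+2 by ring, show (n+1)+i = n+(i+1) by omega]
      rw [hconv]
      linarith [hc]
    have hTdiff : T n - T (n+1)
        = 4/(((K:ℝ)+1)*4^(n+1)) * (2*((2*n+K).choose n : ℝ) - ((2*n+K+1).choose n : ℝ)) := by
      simp only [hT]
      rw [hkeyR]
      field_simp
      ring
    -- factorial facts
    have hc1 : ((2*n+K).choose n : ℝ) * ((n.factorial : ℝ) * ((n+K).factorial : ℝ))
        = ((2*n+K).factorial : ℝ) := by
      have h := Nat.choose_mul_factorial_mul_factorial (n := 2*n+K) (k := n) (by omega)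
      rw [show 2*n+K-n = n+K by omega] at h
      exact_mod_cast congrArg (Nat.cast : ℕ → ℝ) (by rw [← h]; ring)
    have hfact : ((n+K+1).factorial : ℝ) = ((n:ℝ)+K+1) * ((n+K).factorial : ℝ) := by
      rw [show n+K+1 = (n+K)+1 by omega, Nat.factorial_succ]; push_cast; ring
    have hc2 : ((2*n+K+1).choose n : ℝ) * ((n.factorial : ℝ) * (((n:ℝ)+K+1) * ((n+K).factorial : ℝ)))
        = (2*(n:ℝ)+K+1) * ((2*n+K).factorial : ℝ) := by
      have h := Nat.choose_mul_factorial_mul_factorial (n := 2*n+K+1) (k := n) (by omega)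
      rw [show 2*n+K+1-n = n+K+1 by omega] at h
      have h2 : ((2*n+K+1).choose n : ℝ) * ((n.factorial : ℝ) * ((n+K+1).factorial : ℝ))
          = ((2*n+K+1).factorial : ℝ) := by
        exact_mod_cast congrArg (Nat.cast : ℕ → ℝ) (by rw [← h]; ring)
      rw [← hfact, h2, show (2*n+K+1) = (2*n+K)+1 by omega, Nat.factorial_succ]
      push_cast; ring
    have hc : ((2*n+K).choose n : ℝ)
        = ((2*n+K).factorial : ℝ) / ((n.factorial : ℝ) * ((n+K).factorial : ℝ)) := by
      rw [eq_div_iff (by positivity)]; exact hc1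
    have hd : ((2*n+K+1).choose n : ℝ)
        = (2*(n:ℝ)+K+1) * ((2*n+K).factorial : ℝ)
          / ((n.factorial : ℝ) * (((n:ℝ)+K+1) * ((n+K).factorial : ℝ))) := by
      rw [eq_div_iff (by positivity)]; exact hc2
    rw [hf_eq n, hTdiff, hfact, hc, hd]
    rw [div_pow, one_pow]
    field_simp
    ring
  -- partial sums
  have hpart : ∀ n, (∑ j ∈ Finset.range n, f j) = T 0 - T n := by
    intro n
    induction n with
    | zero => simp
    | succ n ih =>
      rw [Finset.sum_range_succ, ih, ← hstep n]
      ring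
  have hT0 : T 0 = 2^(K+1) / ((K:ℝ)+1) := by
    simp only [hT]
    have hs : (∑ i ∈ Finset.range (K+1), ((2*0+K).choose (0+i) : ℝ)) = 2^K := by
      have := Nat.sum_range_choose K
      have h2 : (∑ i ∈ Finset.range (K+1), ((K).choose i : ℝ)) = ((2^K : ℕ) : ℝ) := by
        exact_mod_cast congrArg (Nat.cast : ℕ → ℝ) this
      simpa using h2
    rw [hs]
    field_simp
    ring
  have hTnonneg : ∀ n, 0 ≤ T n := by
    intro n
    apply mul_nonneg (by positivity)
    exact Finset.sum_nonneg fun i _ => Nat.cast_nonneg _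
  have hTle : ∀ n, T n ≤ 2^(K+1) * (((2*n).choose n : ℝ)/4^n) := by
    intro n
    have hsum : (∑ i ∈ Finset.range (K+1), ((2*n+K).choose (n+i) : ℝ))
        ≤ ((K:ℝ)+1) * (2^K * ((2*n).choose n : ℝ)) := by
      calc (∑ i ∈ Finset.range (K+1), ((2*n+K).choose (n+i) : ℝ))
          ≤ ∑ i ∈ Finset.range (K+1), (2^K * ((2*n).choose n : ℝ)) := by
            refine Finset.sum_le_sum fun i _ => ?_
            exact_mod_cast choose_row_bound n K (n+i)
        _ = ((K:ℝ)+1) * (2^K * ((2*n).choose n : ℝ)) := by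
            rw [Finset.sum_const, Finset.card_range]; push_cast; ring
    have h4n : (0:ℝ) < 4^n := by positivity
    calc T n ≤ 2 / ((K+1) * 4^n) * (((K:ℝ)+1) * (2^K * ((2*n).choose n : ℝ))) := by
          exact mul_le_mul_of_nonneg_left hsum (by positivity)
      _ = 2^(K+1) * (((2*n).choose n : ℝ)/4^n) := by
          field_simp
          ring
  have hTlim : Tendsto T atTop (nhds 0) := by
    have h := cb_tendsto_zero.const_mul (2^(K+1) : ℝ)
    rw [mul_zero] at h
    exact squeeze_zero hTnonneg hTle h
  have hplim : Tendsto (fun n => ∑ j ∈ Finset.range n, f j) atTop (nhds (T 0)) := by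
    have : Tendsto (fun n => T 0 - T n) atTop (nhds (T 0 - 0)) :=
      (tendsto_const_nhds).sub hTlim
    rw [sub_zero] at this
    exact this.congr fun n => (hpart n).symm
  have hfnn : ∀ j, 0 ≤ f j := by
    intro j
    simp only [hf]
    positivity
  have hsummable : Summable f := by
    apply summable_of_sum_range_le hfnn
    intro n
    rw [hpart n]
    have := hTnonneg n
    linarith
  have hhs := hsummable.hasSum
  have htsum : ∑' j, f j = T 0 :=
    tendsto_nhds_unique hhs.tendsto_sum_nat hplim
  rw [htsum] at hhs
  rw [hT0] at hhs
  convert hhs using 2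
  push_cast
  ring
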